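/- Let p be a prime, let A be a commutative ring, and let π ∈ A satisfy π^{p−1} ∈ p·A. Let n ≥ 1, let j ≥ 1 and m ≥ (p−1)·j be integers, let P = MvPolynomial (Fin n) A, and let φ : P → P be the A-algebra homomorphism determined by φ(X_t) = π^m · X_t for all t. Then the induced map on Kähler differentials Ω¹_{P/A} → Ω¹_{P/A} (functoriality of Kähler differentials applied to φ over the base A) has image contained in p^j • Ω¹_{P/A}: for every ω ∈ Ω¹_{P/A} there exists η ∈ Ω¹_{P/A} with φ_*(ω) = p^j • η. (This expresses the vanishing modulo p^j, for m ≥ (p−1)j, of the transition maps on integral 1-forms Ω¹(R^+_{α+m})/p^j → Ω¹(R^+_α)/p^j from Remark 4.1 (Remark aff4) of the paper.) -/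

import Mathlib

open MvPolynomial

/-- Auxiliary lemma: if `D(algebraMap P B x)` is divisible by `N` for every `x : P`,
then so is every element in the image of `KaehlerDifferential.map A A P B`. -/
theorem statement8_aux {A P B : Type*} [CommRing A] [CommRing P] [CommRing B]
    [Algebra A P] [Algebra A B] [Algebra P B] [IsScalarTower A P B]
    [SMulCommClass A P B] (N : ℕ)
    (hgen : ∀ x : P, ∃ η, KaehlerDifferential.D A B (algebraMap P B x) = N • η)
    (ω : Ω[P⁄A]) :
    ∃ η, KaehlerDifferential.map A A P B ω = N • η := by
  let S : Submodule B (Ω[B⁄A]) :=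
    { carrier := {w | ∃ η, w = N • η}
      add_mem' := by rintro _ _ ⟨η₁, rfl⟩ ⟨η₂, rfl⟩; exact ⟨η₁ + η₂, (smul_add _ _ _).symm⟩
      zero_mem' := ⟨0, (smul_zero _).symm⟩
      smul_mem' := by rintro x _ ⟨η, rfl⟩; exact ⟨x • η, (smul_comm _ _ _).symm⟩ }
  have key : KaehlerDifferential.map A A P B ω ∈ S := by
    have hω : ω ∈ Submodule.span P (Set.range (KaehlerDifferential.D A P)) := by
      rw [KaehlerDifferential.span_range_derivation]; trivial
    induction hω using Submodule.span_induction with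
    | mem x hx =>
        obtain ⟨y, rfl⟩ := hx
        rw [KaehlerDifferential.map_D]
        exact hgen y
    | zero => rw [map_zero]; exact S.zero_mem
    | add x y _ _ hx hy => rw [map_add]; exact S.add_mem hx hy
    | smul x w _ hw =>
        rw [map_smul, ← algebraMap_smul B x (KaehlerDifferential.map A A P B w)]
        exact S.smul_mem _ hw
  exact key

/-- Remark 4.1 of the paper, on 1-forms: if `π^{p−1} ∈ p·A` and
`m ≥ (p−1)·j`, then the map induced on Kähler differentials `Ω¹_{P/A} → Ω¹_{P/A}`
(functoriality of `Ω¹` applied over the base `A`) by the `A`-algebra endomorphism `φ` of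
`P = A[X_0,…,X_{n−1}]` with `φ(X_t) = π^m·X_t` has image contained in `p^j • Ω¹_{P/A}`. -/
theorem statement8 (p : ℕ) (hp : p.Prime) (A : Type*) [CommRing A]
    (π : A) (hπ : ∃ c : A, π ^ (p - 1) = (p : A) * c)
    (n j m : ℕ) (hn : 1 ≤ n) (hj : 1 ≤ j) (hm : (p - 1) * j ≤ m)
    (φ : MvPolynomial (Fin n) A →ₐ[A] MvPolynomial (Fin n) A)
    (hφ : ∀ t : Fin n, φ (X t) = C (π ^ m) * X t)
    (ω : Ω[MvPolynomial (Fin n) A⁄A]) :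
    letI : Algebra (MvPolynomial (Fin n) A) (MvPolynomial (Fin n) A) :=
      φ.toRingHom.toAlgebra
    haveI : @IsScalarTower A (MvPolynomial (Fin n) A) (MvPolynomial (Fin n) A) _ Algebra.toSMul _ :=
      IsScalarTower.of_algebraMap_eq' φ.comp_algebraMap.symm
    haveI : @SMulCommClass A (MvPolynomial (Fin n) A) (MvPolynomial (Fin n) A) _ Algebra.toSMul :=
      @SMulCommClass.mk _ _ _ _ Algebra.toSMul (fun a x y => by
        show a • (φ x * y) = φ x * (a • y)
        exact (mul_smul_comm a (φ x) y).symm)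
    ∃ η : Ω[MvPolynomial (Fin n) A⁄A],
      KaehlerDifferential.map A A (MvPolynomial (Fin n) A) (MvPolynomial (Fin n) A) ω
        = p ^ j • η := by
  obtain ⟨c, hc⟩ := hπ
  have hπm : π ^ m = (p : A) ^ j * (c ^ j * π ^ (m - (p - 1) * j)) := by
    have h1 : π ^ m = (π ^ (p - 1)) ^ j * π ^ (m - (p - 1) * j) := by
      rw [← pow_mul, ← pow_add, Nat.add_sub_cancel' hm]
    rw [h1, hc, mul_pow]; ring
  set b : A := c ^ j * π ^ (m - (p - 1) * j) with hb
  have hgen : ∀ x : MvPolynomial (Fin n) A,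
      ∃ η, KaehlerDifferential.D A (MvPolynomial (Fin n) A) (φ x) = p ^ j • η := by
    intro x
    induction x using MvPolynomial.induction_on with
    | C a =>
        refine ⟨0, ?_⟩
        rw [show (C a : MvPolynomial (Fin n) A) = algebraMap A _ a from rfl, AlgHom.commutes,
          Derivation.map_algebraMap, smul_zero]
    | add q r hq hr =>
        obtain ⟨η₁, h₁⟩ := hq
        obtain ⟨η₂, h₂⟩ := hr
        exact ⟨η₁ + η₂, by rw [map_add, map_add, h₁, h₂, smul_add]⟩
    | mul_X q t hq =>
        obtain ⟨η₁, h₁⟩ := hq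
        refine ⟨φ q • (b • KaehlerDifferential.D A _ (X t)) + (C (π ^ m) * X t) • η₁, ?_⟩
        rw [map_mul, hφ t, Derivation.leibniz, h₁,
          show (C (π ^ m) : MvPolynomial (Fin n) A) * X t = (π ^ m) • (X t : _) from
            (MvPolynomial.smul_eq_C_mul _ _).symm,
          Derivation.map_smul, hπm, mul_smul,
          show ((p : A) ^ j) = ((p ^ j : ℕ) : A) by push_cast; ring,
          Nat.cast_smul_eq_nsmul, smul_add, smul_comm (φ q), smul_comm _ (p ^ j)]
  letI : Algebra (MvPolynomial (Fin n) A) (MvPolynomial (Fin n) A) :=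
    φ.toRingHom.toAlgebra
  haveI : @IsScalarTower A (MvPolynomial (Fin n) A) (MvPolynomial (Fin n) A) _ Algebra.toSMul _ :=
    IsScalarTower.of_algebraMap_eq' φ.comp_algebraMap.symm
  haveI : @SMulCommClass A (MvPolynomial (Fin n) A) (MvPolynomial (Fin n) A) _ Algebra.toSMul :=
    @SMulCommClass.mk _ _ _ _ Algebra.toSMul (fun a x y => by
      show a • (φ x * y) = φ x * (a • y)
      exact (mul_smul_comm a (φ x) y).symm)
  exact statement8_aux (p ^ j) hgen ω
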